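/- Let S(x,q) be a generating function on ℝ^m × (ℝ^n)^* and, for each k, let S^{(k)}(x,q) = Σ_{i≤k} S_i^{a_1…a_i}(x) q_{a_1}⋯q_{a_i} denote its truncation to degree k in q. Then for every m ≥ 1 the thick-morphism pull-backs Φ_{S^{(m+1)}}^* and Φ_{S^{(m)}}^* coincide up to order m, and their components of order m+1 differ by [Φ_{S^{(m+1)}}^*(g)]_{m+1} − [Φ_{S^{(m)}}^*(g)]_{m+1} = S_{m+1}^{a_1…a_{m+1}}(x) g*_{a_1}(x) ⋯ g*_{a_{m+1}}(x), where g*_a(x) = (∂g/∂y^a)(S_1(x)). -/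

import Mathlib

open scoped BigOperators

namespace ThickMorphism

/-- Real-valued functions on `ℝ^n` (the ambient space of `C^∞(ℝ^n)`). -/
abbrev Fn (n : ℕ) : Type := (Fin n → ℝ) → ℝ

/-- `ℝ^n`-valued functions on `ℝ^m`. -/
abbrev VFn (m n : ℕ) : Type := (Fin m → ℝ) → Fin n → ℝ

/-- `f` is a smooth (`C^∞`) function on `ℝ^n`. -/
def Sm {n : ℕ} (f : Fn n) : Prop := ContDiff ℝ (⊤ : ℕ∞) f

/-- `f` is a smooth (`C^∞`) map from `ℝ^m` to `ℝ^n`. -/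
def SmV {m n : ℕ} (f : VFn m n) : Prop := ContDiff ℝ (⊤ : ℕ∞) f

/-- The partial derivative `∂_b g`. -/
noncomputable def pd {n : ℕ} (b : Fin n) (g : Fn n) : Fn n :=
  fun y => fderiv ℝ g y (Pi.single b 1)

/-- The `a`-th coordinate function `y^a` on `ℝ^n`. -/
def coordFn {n : ℕ} (a : Fin n) : Fn n := fun y => y a

/-- Ordered tuples of `j` positive parts summing to `k` (parts coded in `Fin (k+1)`). -/
def parts (j k : ℕ) : Finset (Fin j → Fin (k + 1)) :=
  Finset.univ.filter fun t => (∑ i, (t i : ℕ)) = k ∧ ∀ i, 0 < (t i : ℕ)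

/-- Order-`k` component of the Taylor expansion (at `Y 0`) of `h ∘ Y`,
where `Y r` is the order-`r` component of a formal map with values in `ℝ^n`:
`Σ_{j} Σ_{r_1+⋯+r_j = k, r_i ≥ 1} (1/j!) ∂^j h (Y 0 x) (Y_{r_1}(x),…,Y_{r_j}(x))`. -/
noncomputable def taylorComp {m n : ℕ} (h : Fn n) (Y : ℕ → VFn m n) (k : ℕ) : Fn m :=
  fun x => ∑ j ∈ Finset.range (k + 1), ∑ t ∈ parts j k,
    ((Nat.factorial j : ℝ))⁻¹ * iteratedFDeriv ℝ j h (Y 0 x) (fun i => Y (t i : ℕ) x)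

/-- A formal functional from `C^∞(ℝ^n)` to `C^∞(ℝ^m)`: a sequence of symmetric
`k`-linear maps `B k` (the polarised forms), preserving smoothness; the order-`k`
component of the functional is the diagonal restriction `g ↦ B k (g,…,g)`. -/
structure FormalFunctional (n m : ℕ) where
  B : (k : ℕ) → MultilinearMap ℝ (fun _ : Fin k => Fn n) (Fn m)
  symm : ∀ (k : ℕ) (σ : Equiv.Perm (Fin k)) (v : Fin k → Fn n), B k (v ∘ σ) = B k v
  smooth : ∀ (k : ℕ) (v : Fin k → Fn n), (∀ i, Sm (v i)) → Sm (B k v)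

/-- The order-`k` component `L_k(g)` of a formal functional. -/
def FormalFunctional.ord {n m : ℕ} (L : FormalFunctional n m) (k : ℕ) (g : Fn n) : Fn m :=
  L.B k (fun _ => g)

/-- A formal map over `C^∞(ℝ^n)` with values in `ℝ^n`-valued functions on `ℝ^m`:
a sequence of symmetric `r`-linear maps `K r`; the order-`r` component at `g`
is the diagonal restriction. -/
structure FormalMap (n m : ℕ) where
  K : (r : ℕ) → MultilinearMap ℝ (fun _ : Fin r => Fn n) (VFn m n)
  symm : ∀ (r : ℕ) (σ : Equiv.Perm (Fin r)) (v : Fin r → Fn n), K r (v ∘ σ) = K r v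
  smooth : ∀ (r : ℕ) (v : Fin r → Fn n), (∀ i, Sm (v i)) → SmV (K r v)

/-- The order-`r` component `K_r(g)` of a formal map. -/
def FormalMap.ord {n m : ℕ} (K : FormalMap n m) (r : ℕ) (g : Fn n) : VFn m n :=
  K.K r (fun _ => g)

/-- The support map `K₀` of a formal map. -/
def FormalMap.supp {n m : ℕ} (K : FormalMap n m) : VFn m n :=
  K.K 0 (fun i => i.elim0)

/-- `L` is a non-linear homomorphism with associated formal map `K`: for all smooth
`g, h` and all `k`, the order-`k`-in-`g` component of the differential of `L` at `g`
in direction `h`, namely `(k+1)·B_{k+1}(h,g,…,g)`, equals the order-`k` component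
of the formal (Taylor) composition `h(K(g))`. -/
def IsNonlinearHomWith {n m : ℕ} (L : FormalFunctional n m) (K : FormalMap n m) : Prop :=
  ∀ (g h : Fn n), Sm g → Sm h → ∀ k : ℕ,
    ((k : ℝ) + 1) • L.B (k + 1) (Fin.cons h (fun _ => g)) =
      taylorComp h (fun r => K.ord r g) k

/-- `L` is a non-linear homomorphism. -/
def IsNonlinearHom {n m : ℕ} (L : FormalFunctional n m) : Prop :=
  ∃ K : FormalMap n m, IsNonlinearHomWith L K

/-- A generating function `S(x,q) = Σ_k S_k^{a_1…a_k}(x) q_{a_1}⋯q_{a_k}` of a thick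
morphism `ℝ^m ⇛ ℝ^n`: smooth symmetric tensors `S k x : (Fin k → Fin n) → ℝ`. -/
structure GenFn (m n : ℕ) where
  S : (k : ℕ) → (Fin m → ℝ) → (Fin k → Fin n) → ℝ
  symm : ∀ (k : ℕ) (σ : Equiv.Perm (Fin k)) (x : Fin m → ℝ) (a : Fin k → Fin n),
    S k x (a ∘ σ) = S k x a
  smooth : ∀ (k : ℕ) (a : Fin k → Fin n), Sm (fun x => S k x a)

/-- The first-order coefficient `S_1` of a generating function, as a map `ℝ^m → ℝ^n`. -/
def sOne {m n : ℕ} (S : GenFn m n) : VFn m n := fun x a => S.S 1 x (fun _ => a)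

/-- Order-`t`-in-`g` component (`t ≥ 1`) of `q_b = (∂_b g)(y(x,g))`, the formal map `y`
having components `Y`: it is the Taylor-composition component of order `t-1`. -/
noncomputable def qComp {m n : ℕ} (g : Fn n) (Y : ℕ → VFn m n) (b : Fin n) (t : ℕ) : Fn m :=
  taylorComp (pd b g) Y (t - 1)

/-- Order-`N`-in-`g` component of `∂S(x,q)/∂q_a` evaluated at `q_b = (∂_b g)(y(x,g))`,
where `y` has components `Y`. -/
noncomputable def dSComp {m n : ℕ} (S : GenFn m n) (g : Fn n) (Y : ℕ → VFn m n) (N : ℕ) :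
    VFn m n :=
  fun x a => ∑ j ∈ Finset.range (N + 1), ∑ b : Fin j → Fin n, ∑ t ∈ parts j N,
    ((j : ℝ) + 1) * S.S (j + 1) x (Fin.cons a b) * ∏ i, qComp g Y (b i) (t i : ℕ) x

/-- Auxiliary recursion: `thickYAux S g k r` is the order-`r` component `y_r(x,g)` of the
formal map of the thick morphism `Φ_S` for `r ≤ k` (and `0` for `r > k`). -/
noncomputable def thickYAux {m n : ℕ} (S : GenFn m n) (g : Fn n) : ℕ → ℕ → VFn m n
  | 0 => fun r => if r = 0 then (fun x a => S.S 1 x (fun _ => a)) else 0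
  | k + 1 => fun r =>
      if r = k + 1 then dSComp S g (thickYAux S g k) (k + 1) else thickYAux S g k r

/-- The order-`k` component `y_k(x,g)` of the formal map of the thick morphism `Φ_S`:
`y_0 = S_1`, and `y_{k+1}` is the order-`(k+1)`-in-`g` component of `∂S/∂q_a` at
`q = (∂g)(y_{≤k}(x,g))`. -/
noncomputable def thickY {m n : ℕ} (S : GenFn m n) (g : Fn n) (k : ℕ) : VFn m n :=
  thickYAux S g k k

/-- Order-`k`-in-`g` component of `S(x,q)` evaluated at `q = (∂g)(y(x,g))`. -/
noncomputable def SqComp {m n : ℕ} (S : GenFn m n) (g : Fn n) (k : ℕ) : Fn m :=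
  fun x => ∑ j ∈ Finset.range (k + 1), ∑ b : Fin j → Fin n, ∑ t ∈ parts j k,
    S.S j x b * ∏ i, qComp g (thickY S g) (b i) (t i : ℕ) x

/-- Order-`k`-in-`g` component of `y^a q_a` at `y = y(x,g)`, `q = (∂g)(y(x,g))`. -/
noncomputable def yqComp {m n : ℕ} (S : GenFn m n) (g : Fn n) (k : ℕ) : Fn m :=
  fun x => ∑ a : Fin n, ∑ t ∈ Finset.Icc 1 k,
    thickY S g (k - t) x a * qComp g (thickY S g) a t x

/-- The order-`k`-in-`g` component of the thick-morphism pull-back `Φ_S^*(g)`, i.e. of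
`g(y) + S(x,q) − y^a q_a` at `y = y(x,g)`, `q = (∂g)(y(x,g))`, all compositions being
expanded by Taylor series at `y_0 = S_1(x)`. -/
noncomputable def thickPull {m n : ℕ} (S : GenFn m n) (g : Fn n) (k : ℕ) : Fn m :=
  fun x =>
    (if k = 0 then 0 else taylorComp g (thickY S g) (k - 1) x)
      + SqComp S g k x - yqComp S g k x

/-- The coordinate functions are smooth. -/
lemma coordFn_smooth {n : ℕ} (a : Fin n) : Sm (coordFn a) :=
  (ContinuousLinearMap.proj a : (Fin n → ℝ) →L[ℝ] ℝ).contDiff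

/-- The generating function `S_L` associated with a formal functional `L`:
`S_k^{a_1…a_k}(x) = B_k(y^{a_1},…,y^{a_k})(x)`, the polarised forms of `L`
evaluated on the coordinate functions of `ℝ^n`. -/
noncomputable def assocGen {n m : ℕ} (L : FormalFunctional n m) : GenFn m n where
  S := fun k x a => L.B k (fun i => coordFn (a i)) x
  symm := by
    intro k σ x a
    have h := L.symm k σ (fun i => coordFn (a i))
    exact congrFun h x
  smooth := fun k a => L.smooth k _ (fun i => coordFn_smooth (a i))

/-- Truncation of a generating function to degree `≤ k` in `q`. -/
noncomputable def truncGen {m n : ℕ} (S : GenFn m n) (k : ℕ) : GenFn m n where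
  S := fun i x a => if i ≤ k then S.S i x a else 0
  symm := by
    intro i σ x a
    by_cases h : i ≤ k <;> simp [h, S.symm]
  smooth := by
    intro i a
    by_cases h : i ≤ k
    · simpa [Sm, h] using S.smooth i a
    · simpa [Sm, h] using (contDiff_const : ContDiff ℝ (⊤ : ℕ∞) fun _ : Fin m → ℝ => (0 : ℝ))


section Helpers

variable {m n : ℕ}

lemma mem_parts {j k : ℕ} {t : Fin j → Fin (k + 1)} :
    t ∈ parts j k ↔ (∑ i, (t i : ℕ)) = k ∧ ∀ i, 0 < (t i : ℕ) := by
  simp [parts]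

lemma parts_lt_of_ne_one {j k : ℕ} (hj : j ≠ 1) {t : Fin j → Fin (k + 1)}
    (ht : t ∈ parts j k) (i : Fin j) : (t i : ℕ) < k := by
  obtain ⟨hsum, hpos⟩ := mem_parts.mp ht
  have hj0 : j ≠ 0 := fun h => (h ▸ i).elim0
  have hj2 : 1 < Fintype.card (Fin j) := by simp; omega
  obtain ⟨i', hi'⟩ := Fintype.exists_ne_of_one_lt_card hj2 i
  have h1 : ∑ i'' ∈ Finset.univ.erase i', (t i'' : ℕ) + (t i' : ℕ) = k := by
    rw [Finset.sum_erase_add _ _ (Finset.mem_univ i')]; exact hsum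
  have h2 : (t i : ℕ) ≤ ∑ i'' ∈ Finset.univ.erase i', (t i'' : ℕ) :=
    Finset.single_le_sum (f := fun i'' => (t i'' : ℕ)) (fun _ _ => Nat.zero_le _)
      (Finset.mem_erase.mpr ⟨Ne.symm hi', Finset.mem_univ i⟩)
  have h3 : 0 < (t i' : ℕ) := hpos i'
  omega

lemma parts_one {k : ℕ} (hk : 1 ≤ k) :
    parts 1 k = {fun _ => (⟨k, Nat.lt_succ_self k⟩ : Fin (k + 1))} := by
  ext t
  simp only [parts, Finset.mem_filter, Finset.mem_univ, true_and, Finset.mem_singleton,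
    Fin.sum_univ_one]
  constructor
  · rintro ⟨h, _⟩
    funext i
    have hi : i = 0 := Subsingleton.elim _ _
    subst hi
    exact Fin.ext h
  · rintro rfl
    exact ⟨rfl, fun i => hk⟩

lemma parts_all_one {k : ℕ} (hk : 1 ≤ k) :
    parts k k = {fun _ => (⟨1, by omega⟩ : Fin (k + 1))} := by
  ext t
  simp only [parts, Finset.mem_filter, Finset.mem_univ, true_and, Finset.mem_singleton]
  constructor
  · rintro ⟨hsum, hpos⟩
    have hone : ∑ i : Fin k, (1 : ℕ) = ∑ i : Fin k, (t i : ℕ) := by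
      simp [hsum]
    have := (Finset.sum_eq_sum_iff_of_le (fun i _ => hpos i)).mp hone
    funext i
    exact Fin.ext ((this i (Finset.mem_univ i)).symm)
  · rintro rfl
    refine ⟨by simp, fun i => by simp⟩

lemma taylorComp_congr (h : Fn n) {Y Y' : ℕ → VFn m n} (k : ℕ) (x : Fin m → ℝ)
    (H : ∀ r ≤ k, Y r x = Y' r x) : taylorComp h Y k x = taylorComp h Y' k x := by
  unfold taylorComp
  refine Finset.sum_congr rfl fun j _ => Finset.sum_congr rfl fun t _ => ?_
  have hfun : (fun i => Y (t i : ℕ) x) = fun i => Y' (t i : ℕ) x :=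
    funext fun i => H (t i : ℕ) (Nat.lt_succ_iff.mp (t i).isLt)
  rw [H 0 (Nat.zero_le _), hfun]

lemma taylorComp_zero (h : Fn n) (Y : ℕ → VFn m n) (x : Fin m → ℝ) :
    taylorComp h Y 0 x = h (Y 0 x) := by
  unfold taylorComp
  rw [Finset.sum_range_one]
  have hp : parts 0 0 = {(fun i => i.elim0 : Fin 0 → Fin 1)} := by
    ext t
    simp only [parts, Finset.mem_filter, Finset.mem_univ, true_and, Finset.mem_singleton]
    constructor
    · intro _; funext i; exact i.elim0
    · rintro rfl; exact ⟨by simp, fun i => i.elim0⟩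
  rw [hp, Finset.sum_singleton, iteratedFDeriv_zero_apply]
  simp

lemma qComp_congr (g : Fn n) {Y Y' : ℕ → VFn m n} (b : Fin n) (t : ℕ) (x : Fin m → ℝ)
    (H : ∀ r ≤ t - 1, Y r x = Y' r x) : qComp g Y b t x = qComp g Y' b t x :=
  taylorComp_congr _ _ _ H

lemma qComp_one (g : Fn n) (Y : ℕ → VFn m n) (b : Fin n) (x : Fin m → ℝ) :
    qComp g Y b 1 x = pd b g (Y 0 x) :=
  taylorComp_zero _ _ _

lemma taylorComp_sub_top (h : Fn n) {Y Y' : ℕ → VFn m n} {k : ℕ} (hk : 1 ≤ k)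
    (x : Fin m → ℝ) (H : ∀ r < k, Y r x = Y' r x) :
    taylorComp h Y k x - taylorComp h Y' k x
      = fderiv ℝ h (Y 0 x) (Y k x - Y' k x) := by
  unfold taylorComp
  have h1 : (1 : ℕ) ∈ Finset.range (k + 1) := by simp; omega
  rw [← Finset.add_sum_erase _ _ h1, ← Finset.add_sum_erase _ _ h1]
  have hrest : ∑ j ∈ (Finset.range (k + 1)).erase 1,
      ∑ t ∈ parts j k, ((Nat.factorial j : ℝ))⁻¹
        * iteratedFDeriv ℝ j h (Y 0 x) (fun i => Y (t i : ℕ) x)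
      = ∑ j ∈ (Finset.range (k + 1)).erase 1,
      ∑ t ∈ parts j k, ((Nat.factorial j : ℝ))⁻¹
        * iteratedFDeriv ℝ j h (Y' 0 x) (fun i => Y' (t i : ℕ) x) := by
    refine Finset.sum_congr rfl fun j hj => Finset.sum_congr rfl fun t ht => ?_
    have hj1 : j ≠ 1 := (Finset.mem_erase.mp hj).1
    have hfun : (fun i => Y (t i : ℕ) x) = fun i => Y' (t i : ℕ) x :=
      funext fun i => H _ (parts_lt_of_ne_one hj1 ht i)
    rw [H 0 hk, hfun]
  rw [hrest, add_sub_add_right_eq_sub, parts_one hk, Finset.sum_singleton,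
    Finset.sum_singleton, iteratedFDeriv_one_apply, iteratedFDeriv_one_apply, H 0 hk]
  simp only [Nat.factorial_one, Nat.cast_one, inv_one, one_mul]
  rw [← ContinuousLinearMap.map_sub]

lemma fderiv_apply_eq_sum (h : Fn n) (y v : Fin n → ℝ) :
    fderiv ℝ h y v = ∑ a, v a * pd a h y := by
  have hv : v = ∑ a, v a • (Pi.single a 1 : Fin n → ℝ) := by
    funext b
    simp [Pi.single_apply]
  conv_lhs => rw [hv]
  rw [map_sum]
  refine Finset.sum_congr rfl fun a _ => ?_
  rw [ContinuousLinearMap.map_smul]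
  rfl

lemma dSComp_congr {S S' : GenFn m n} (g : Fn n) {Y Y' : ℕ → VFn m n} (N : ℕ)
    (hS : ∀ j ≤ N + 1, S.S j = S'.S j) (hY : ∀ r < N, Y r = Y' r) :
    dSComp S g Y N = dSComp S' g Y' N := by
  funext x a
  unfold dSComp
  refine Finset.sum_congr rfl fun j hj => Finset.sum_congr rfl fun b _ =>
    Finset.sum_congr rfl fun t ht => ?_
  have hjN : j ≤ N := Nat.lt_succ_iff.mp (Finset.mem_range.mp hj)
  rw [hS (j + 1) (by omega)]
  congr 1
  refine Finset.prod_congr rfl fun i _ => ?_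
  refine qComp_congr g _ _ x fun r hr => ?_
  have hpos := (mem_parts.mp ht).2 i
  have hle : (t i : ℕ) ≤ N := Nat.lt_succ_iff.mp (t i).isLt
  rw [hY r (by omega)]

lemma thickYAux_stable (S : GenFn m n) (g : Fn n) :
    ∀ k r, r ≤ k → thickYAux S g k r = thickY S g r := by
  intro k
  induction k with
  | zero =>
    intro r hr
    have : r = 0 := Nat.le_zero.mp hr
    subst this; rfl
  | succ k ih =>
    intro r hr
    rcases Nat.lt_succ_iff_lt_or_eq.mp (Nat.lt_succ_of_le hr) with h | h
    · have hne : r ≠ k + 1 := by omega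
      show (if r = k + 1 then _ else thickYAux S g k r) = _
      rw [if_neg hne]
      exact ih r (by omega)
    · subst h; rfl

lemma thickY_congr {S S' : GenFn m n} (g : Fn n) (K : ℕ)
    (hS : ∀ i ≤ K, S.S i = S'.S i) :
    ∀ r, r + 1 ≤ K → thickY S g r = thickY S' g r := by
  intro r
  induction r using Nat.strong_induction_on with
  | _ r ih =>
    intro hr
    match r with
    | 0 =>
      show (fun x a => S.S 1 x (fun _ => a)) = (fun x a => S'.S 1 x (fun _ => a))
      have h1 := hS 1 (by omega)
      funext x a
      exact congrFun (congrFun h1 x) _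
    | Nat.succ r =>
      have e1 : thickY S g (r + 1) = dSComp S g (thickYAux S g r) (r + 1) := by
        show thickYAux S g (r + 1) (r + 1) = _
        simp [thickYAux]
      have e2 : thickY S' g (r + 1) = dSComp S' g (thickYAux S' g r) (r + 1) := by
        show thickYAux S' g (r + 1) (r + 1) = _
        simp [thickYAux]
      rw [e1, e2]
      refine dSComp_congr g (r + 1) (fun j hj => hS j (by omega)) fun s hs => ?_
      rw [thickYAux_stable S g r s (by omega), thickYAux_stable S' g r s (by omega)]
      exact ih s (by omega) (by omega)

lemma SqComp_congr {S S' : GenFn m n} (g : Fn n) (k : ℕ)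
    (hS : ∀ j ≤ k, S.S j = S'.S j) (hY : ∀ r < k, thickY S g r = thickY S' g r) :
    SqComp S g k = SqComp S' g k := by
  funext x
  unfold SqComp
  refine Finset.sum_congr rfl fun j hj => Finset.sum_congr rfl fun b _ =>
    Finset.sum_congr rfl fun t ht => ?_
  rw [hS j (Nat.lt_succ_iff.mp (Finset.mem_range.mp hj))]
  congr 1
  refine Finset.prod_congr rfl fun i _ => ?_
  refine qComp_congr g _ _ x fun r hr => ?_
  have hpos := (mem_parts.mp ht).2 i
  have hle : (t i : ℕ) ≤ k := Nat.lt_succ_iff.mp (t i).isLt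
  rw [hY r (by omega)]

lemma yqComp_congr {S S' : GenFn m n} (g : Fn n) (k : ℕ)
    (hY : ∀ r < k, thickY S g r = thickY S' g r) :
    yqComp S g k = yqComp S' g k := by
  funext x
  unfold yqComp
  refine Finset.sum_congr rfl fun a _ => Finset.sum_congr rfl fun t ht => ?_
  obtain ⟨ht1, ht2⟩ := Finset.mem_Icc.mp ht
  rw [hY (k - t) (by omega)]
  congr 1
  refine qComp_congr g _ _ x fun r hr => ?_
  rw [hY r (by omega)]

lemma thickPull_congr {S S' : GenFn m n} (g : Fn n) (k : ℕ)
    (hS : ∀ j ≤ k, S.S j = S'.S j) (hY : ∀ r < k, thickY S g r = thickY S' g r) :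
    thickPull S g k = thickPull S' g k := by
  funext x
  unfold thickPull
  rw [SqComp_congr g k hS hY, yqComp_congr g k hY]
  congr 1
  by_cases hk : k = 0
  · simp [hk]
  · rw [if_neg hk, if_neg hk]
    congr 1
    refine taylorComp_congr g _ x fun r hr => ?_
    rw [hY r (by omega)]

end Helpers

section Part2

variable {m n : ℕ}

lemma SqComp_sub (T1 T2 : GenFn m n) (g : Fn n) (p : ℕ) (hp : 1 ≤ p)
    (x : Fin m → ℝ) (σ : Fin n → ℝ)
    (hS : ∀ j ≤ p, T1.S j = T2.S j)
    (hT2 : ∀ b : Fin (p + 1) → Fin n, T2.S (p + 1) x b = 0)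
    (hYlt : ∀ r < p, thickY T1 g r = thickY T2 g r)
    (hY0 : thickY T1 g 0 x = σ) :
    SqComp T1 g (p + 1) x - SqComp T2 g (p + 1) x
      = (∑ b : Fin (p + 1) → Fin n, T1.S (p + 1) x b * ∏ i, pd (b i) g σ)
        + ∑ a : Fin n, T1.S 1 x (fun _ => a)
            * fderiv ℝ (pd a g) σ (thickY T1 g p x - thickY T2 g p x) := by
  set X := ∑ b : Fin (p + 1) → Fin n, T1.S (p + 1) x b * ∏ i, pd (b i) g σ with hX
  set E := ∑ a : Fin n, T1.S 1 x (fun _ => a)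
      * fderiv ℝ (pd a g) σ (thickY T1 g p x - thickY T2 g p x) with hE
  have key : ∀ j ∈ Finset.range (p + 1 + 1),
      (∑ b : Fin j → Fin n, ∑ t ∈ parts j (p + 1),
          T1.S j x b * ∏ i, qComp g (thickY T1 g) (b i) (t i : ℕ) x)
        - (∑ b : Fin j → Fin n, ∑ t ∈ parts j (p + 1),
          T2.S j x b * ∏ i, qComp g (thickY T2 g) (b i) (t i : ℕ) x)
      = (if j = p + 1 then X else 0) + (if j = 1 then E else 0) := by
    intro j hj
    have hjle : j ≤ p + 1 := Nat.lt_succ_iff.mp (Finset.mem_range.mp hj)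
    by_cases hjp : j = p + 1
    · subst hjp
      rw [if_pos rfl, if_neg (by omega), add_zero]
      rw [parts_all_one (by omega)]
      simp only [Finset.sum_singleton]
      have hz : ∑ b : Fin (p + 1) → Fin n,
          T2.S (p + 1) x b * ∏ i, qComp g (thickY T2 g) (b i)
            (((fun _ => (⟨1, by omega⟩ : Fin (p + 1 + 1))) i : Fin (p + 1 + 1)) : ℕ) x = 0 :=
        Finset.sum_eq_zero fun b _ => by rw [hT2 b, zero_mul]
      rw [hz, sub_zero, hX]
      refine Finset.sum_congr rfl fun b _ => ?_
      congr 1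
      refine Finset.prod_congr rfl fun i _ => ?_
      show qComp g (thickY T1 g) (b i) 1 x = _
      rw [qComp_one, hY0]
    · by_cases hj1 : j = 1
      · subst hj1
        rw [if_neg hjp, if_pos rfl, zero_add]
        rw [parts_one (by omega)]
        simp only [Finset.sum_singleton]
        rw [← Finset.sum_sub_distrib, hE]
        refine Fintype.sum_equiv (Equiv.funUnique (Fin 1) (Fin n)) _ _ fun b => ?_
        have hd : b = fun _ => (Equiv.funUnique (Fin 1) (Fin n)) b :=
          funext fun i => congrArg b (Subsingleton.elim _ _)
        rw [Fin.prod_univ_one, Fin.prod_univ_one]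
        have hq : qComp g (thickY T1 g) (b 0) (p + 1) x
            - qComp g (thickY T2 g) (b 0) (p + 1) x
            = fderiv ℝ (pd (b 0) g) σ (thickY T1 g p x - thickY T2 g p x) := by
          show taylorComp (pd (b 0) g) (thickY T1 g) p x
              - taylorComp (pd (b 0) g) (thickY T2 g) p x = _
          rw [taylorComp_sub_top (pd (b 0) g) hp x (fun r hr => congrFun (hYlt r hr) x), hY0]
        have hS1 : T2.S 1 x b = T1.S 1 x b := by rw [hS 1 hp]
        show T1.S 1 x b * qComp g (thickY T1 g) (b 0) (p + 1) x
            - T2.S 1 x b * qComp g (thickY T2 g) (b 0) (p + 1) x = _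
        rw [hS1, ← mul_sub, hq]
        have hb0 : (Equiv.funUnique (Fin 1) (Fin n)) b = b 0 := congrArg b (Subsingleton.elim _ _)
        rw [hb0]
        congr 1
        exact congrArg (T1.S 1 x) hd.symm ▸ congrArg (T1.S 1 x) (funext fun i => rfl)
      · rw [if_neg hjp, if_neg hj1, add_zero, sub_eq_zero]
        refine Finset.sum_congr rfl fun b _ => Finset.sum_congr rfl fun t ht => ?_
        rw [hS j (by omega)]
        congr 1
        refine Finset.prod_congr rfl fun i _ => ?_
        refine qComp_congr g _ _ x fun r hr => ?_
        have hlt : (t i : ℕ) < p + 1 := parts_lt_of_ne_one hj1 ht i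
        have hpos := (mem_parts.mp ht).2 i
        rw [hYlt r (by omega)]
  calc SqComp T1 g (p + 1) x - SqComp T2 g (p + 1) x
      = ∑ j ∈ Finset.range (p + 1 + 1),
        ((∑ b : Fin j → Fin n, ∑ t ∈ parts j (p + 1),
            T1.S j x b * ∏ i, qComp g (thickY T1 g) (b i) (t i : ℕ) x)
          - (∑ b : Fin j → Fin n, ∑ t ∈ parts j (p + 1),
            T2.S j x b * ∏ i, qComp g (thickY T2 g) (b i) (t i : ℕ) x)) := by
        rw [Finset.sum_sub_distrib]; rfl
    _ = ∑ j ∈ Finset.range (p + 1 + 1),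
        ((if j = p + 1 then X else 0) + (if j = 1 then E else 0)) :=
        Finset.sum_congr rfl key
    _ = X + E := by
        rw [Finset.sum_add_distrib, Finset.sum_ite_eq', Finset.sum_ite_eq']
        rw [if_pos (by simp only [Finset.mem_range]; omega), if_pos (by simp only [Finset.mem_range]; omega)]

lemma yqComp_sub (T1 T2 : GenFn m n) (g : Fn n) (p : ℕ) (hp : 1 ≤ p)
    (x : Fin m → ℝ) (σ : Fin n → ℝ)
    (hYlt : ∀ r < p, thickY T1 g r = thickY T2 g r)
    (hY0 : thickY T1 g 0 x = σ) (hY0' : thickY T2 g 0 x = σ) :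
    yqComp T1 g (p + 1) x - yqComp T2 g (p + 1) x
      = (∑ a : Fin n, (thickY T1 g p x - thickY T2 g p x) a * pd a g σ)
        + ∑ a : Fin n, σ a * fderiv ℝ (pd a g) σ (thickY T1 g p x - thickY T2 g p x) := by
  set P := ∑ a : Fin n, (thickY T1 g p x - thickY T2 g p x) a * pd a g σ with hP
  set Q := ∑ a : Fin n, σ a * fderiv ℝ (pd a g) σ (thickY T1 g p x - thickY T2 g p x) with hQ
  have key : ∀ t ∈ Finset.Icc 1 (p + 1),
      (∑ a : Fin n, thickY T1 g (p + 1 - t) x a * qComp g (thickY T1 g) a t x)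
        - (∑ a : Fin n, thickY T2 g (p + 1 - t) x a * qComp g (thickY T2 g) a t x)
      = (if t = 1 then P else 0) + (if t = p + 1 then Q else 0) := by
    intro t ht
    obtain ⟨ht1, ht2⟩ := Finset.mem_Icc.mp ht
    by_cases h1 : t = 1
    · subst h1
      rw [if_pos rfl, if_neg (by omega), add_zero]
      rw [← Finset.sum_sub_distrib, hP]
      refine Finset.sum_congr rfl fun a _ => ?_
      have e1 : qComp g (thickY T1 g) a 1 x = pd a g σ := by rw [qComp_one, hY0]
      have e2 : qComp g (thickY T2 g) a 1 x = pd a g σ := by rw [qComp_one, hY0']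
      show thickY T1 g p x a * qComp g (thickY T1 g) a 1 x
          - thickY T2 g p x a * qComp g (thickY T2 g) a 1 x = _
      rw [e1, e2, ← sub_mul]
      rfl
    · by_cases hpt : t = p + 1
      · subst hpt
        rw [if_neg h1, if_pos rfl, zero_add]
        rw [← Finset.sum_sub_distrib, hQ]
        refine Finset.sum_congr rfl fun a _ => ?_
        have hq : qComp g (thickY T1 g) a (p + 1) x
            - qComp g (thickY T2 g) a (p + 1) x
            = fderiv ℝ (pd a g) σ (thickY T1 g p x - thickY T2 g p x) := by
          show taylorComp (pd a g) (thickY T1 g) p x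
              - taylorComp (pd a g) (thickY T2 g) p x = _
          rw [taylorComp_sub_top (pd a g) hp x (fun r hr => congrFun (hYlt r hr) x), hY0]
        have e0 : p + 1 - (p + 1) = 0 := by omega
        rw [e0]
        rw [congrFun hY0 a, congrFun hY0' a, ← mul_sub, hq]
      · rw [if_neg h1, if_neg hpt, add_zero, sub_eq_zero]
        refine Finset.sum_congr rfl fun a _ => ?_
        rw [hYlt (p + 1 - t) (by omega)]
        congr 1
        refine qComp_congr g _ _ x fun r hr => ?_
        rw [hYlt r (by omega)]
  calc yqComp T1 g (p + 1) x - yqComp T2 g (p + 1) x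
      = ∑ t ∈ Finset.Icc 1 (p + 1),
        ((∑ a : Fin n, thickY T1 g (p + 1 - t) x a * qComp g (thickY T1 g) a t x)
          - (∑ a : Fin n, thickY T2 g (p + 1 - t) x a * qComp g (thickY T2 g) a t x)) := by
        unfold yqComp
        rw [Finset.sum_comm (s := Finset.univ) (t := Finset.Icc 1 (p + 1)),
          Finset.sum_comm (s := Finset.univ) (t := Finset.Icc 1 (p + 1)),
          Finset.sum_sub_distrib]
    _ = ∑ t ∈ Finset.Icc 1 (p + 1),
        ((if t = 1 then P else 0) + (if t = p + 1 then Q else 0)) :=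
        Finset.sum_congr rfl key
    _ = P + Q := by
        rw [Finset.sum_add_distrib, Finset.sum_ite_eq', Finset.sum_ite_eq']
        rw [if_pos (by simp only [Finset.mem_Icc]; omega), if_pos (by simp only [Finset.mem_Icc]; omega)]

end Part2

/-- Let `S^{(k)} = truncGen S k` denote the truncation of `S` to degree
`k` in `q`. For every `p ≥ 1` the pull-backs `Φ_{S^{(p+1)}}^*` and `Φ_{S^{(p)}}^*`
coincide up to order `p`, and their components of order `p+1` differ by
`S_{p+1}^{a_1…a_{p+1}}(x) g*_{a_1}(x) ⋯ g*_{a_{p+1}}(x)`, where `g*_a(x) = (∂_a g)(S_1(x))`. -/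
theorem truncation_approximation {m n : ℕ} (S : GenFn m n) (p : ℕ) (hp : 1 ≤ p)
    (g : Fn n) (hg : Sm g) :
    (∀ r ≤ p, thickPull (truncGen S (p + 1)) g r = thickPull (truncGen S p) g r)
    ∧ ∀ x : Fin m → ℝ,
        thickPull (truncGen S (p + 1)) g (p + 1) x
          - thickPull (truncGen S p) g (p + 1) x
        = ∑ a : Fin (p + 1) → Fin n, S.S (p + 1) x a * ∏ i, pd (a i) g (sOne S x) := by
  have hS_le : ∀ j ≤ p, (truncGen S (p + 1)).S j = (truncGen S p).S j := by
    intro j hj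
    funext x a
    show (if j ≤ p + 1 then S.S j x a else 0) = (if j ≤ p then S.S j x a else 0)
    rw [if_pos (by omega), if_pos hj]
  have hYlt : ∀ r < p, thickY (truncGen S (p + 1)) g r = thickY (truncGen S p) g r :=
    fun r hr => thickY_congr g p hS_le r (by omega)
  constructor
  · intro r hr
    exact thickPull_congr g r (fun j hj => hS_le j (le_trans hj hr))
      (fun r' hr' => hYlt r' (lt_of_lt_of_le hr' hr))
  · intro x
    have hY0₁ : thickY (truncGen S (p + 1)) g 0 x = sOne S x := by
      funext a
      show (if 1 ≤ p + 1 then S.S 1 x (fun _ => a) else 0) = S.S 1 x (fun _ => a)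
      rw [if_pos (by omega)]
    have hY0₂ : thickY (truncGen S p) g 0 x = sOne S x := by
      funext a
      show (if 1 ≤ p then S.S 1 x (fun _ => a) else 0) = S.S 1 x (fun _ => a)
      rw [if_pos hp]
    have hT2 : ∀ b : Fin (p + 1) → Fin n, (truncGen S p).S (p + 1) x b = 0 := by
      intro b
      show (if p + 1 ≤ p then S.S (p + 1) x b else 0) = 0
      rw [if_neg (by omega)]
    have hpull : ∀ T : GenFn m n, thickPull T g (p + 1) x
        = taylorComp g (thickY T g) p x + SqComp T g (p + 1) x - yqComp T g (p + 1) x := by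
      intro T
      unfold thickPull
      rw [if_neg (by omega : ¬(p + 1 = 0)), Nat.add_sub_cancel]
    have h_t : taylorComp g (thickY (truncGen S (p + 1)) g) p x
          - taylorComp g (thickY (truncGen S p) g) p x
        = ∑ a : Fin n, (thickY (truncGen S (p + 1)) g p x - thickY (truncGen S p) g p x) a
            * pd a g (sOne S x) := by
      rw [taylorComp_sub_top g hp x (fun r hr => congrFun (hYlt r hr) x), hY0₁,
        fderiv_apply_eq_sum]
    have h_s := SqComp_sub (truncGen S (p + 1)) (truncGen S p) g p hp x (sOne S x)
      hS_le hT2 hYlt hY0₁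
    have h_y := yqComp_sub (truncGen S (p + 1)) (truncGen S p) g p hp x (sOne S x)
      hYlt hY0₁ hY0₂
    have hbr1 : (∑ b : Fin (p + 1) → Fin n,
          (truncGen S (p + 1)).S (p + 1) x b * ∏ i, pd (b i) g (sOne S x))
        = ∑ a : Fin (p + 1) → Fin n, S.S (p + 1) x a * ∏ i, pd (a i) g (sOne S x) := by
      refine Finset.sum_congr rfl fun b _ => ?_
      congr 1
      show (if p + 1 ≤ p + 1 then S.S (p + 1) x b else 0) = _
      rw [if_pos le_rfl]
    have hbr2 : (∑ a : Fin n, (truncGen S (p + 1)).S 1 x (fun _ => a)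
          * fderiv ℝ (pd a g) (sOne S x)
            (thickY (truncGen S (p + 1)) g p x - thickY (truncGen S p) g p x))
        = ∑ a : Fin n, sOne S x a * fderiv ℝ (pd a g) (sOne S x)
            (thickY (truncGen S (p + 1)) g p x - thickY (truncGen S p) g p x) := by
      refine Finset.sum_congr rfl fun a _ => ?_
      congr 1
    rw [hbr1, hbr2] at h_s
    rw [hpull, hpull]
    linarith [h_t, h_s, h_y]


end ThickMorphism
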